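/- (Alekseev's formula) Let f : ℝ × ℝ^d → ℝ^d be continuously differentiable and g : ℝ × ℝ^d → ℝ^d be continuous. Let u(t, s, u₀), defined for t ≥ s and u₀ ∈ ℝ^d, be such that for each (s, u₀), t ↦ u(t, s, u₀) is the solution of u̇(t) = f(t, u(t)) with u(s, s, u₀) = u₀, and assume the map (s, u₀) ↦ u(t, s, u₀) is continuously differentiable for each t. For t ≥ s let Φ(t, s, u₀) denote the d×d matrix equal to the derivative of the map u₀ ↦ u(t, s, u₀); equivalently, Φ(·, s, u₀) is the fundamental matrix of the variational system v̇(t) = (∂f/∂u)(t, u(t, s, u₀)) v(t) with Φ(s, s, u₀) = I. Let t₀ ∈ ℝ, p₀ ∈ ℝ^d, and let p : [t₀, T] → ℝ^d be differentiable with ṗ(t) = f(t, p(t)) + g(t, p(t)) and p(t₀) = p₀. Then for all t ∈ [t₀, T]: p(t) = u(t, t₀, p₀) + ∫_{t₀}^{t} Φ(t, s, p(s)) g(s, p(s)) ds. -/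

import Mathlib

open Set Metric

/-- A `C¹` function is Lipschitz on any compact convex set. -/
lemma contDiff_lipschitzOnWith_of_compact_convex
    {E F : Type*} [NormedAddCommGroup E] [NormedSpace ℝ E]
    [NormedAddCommGroup F] [NormedSpace ℝ F]
    {f : E → F} (hf : ContDiff ℝ 1 f) {S : Set E}
    (hS : Convex ℝ S) (hc : IsCompact S) :
    ∃ K : NNReal, LipschitzOnWith K f S := by
  obtain ⟨C, hC⟩ := hc.exists_bound_of_continuousOn
    ((hf.continuous_fderiv one_ne_zero).continuousOn (s := S))
  refine ⟨⟨max C 0, le_max_right _ _⟩,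
    hS.lipschitzOnWith_of_nnnorm_hasFDerivWithin_le
      (fun x _ => ((hf.differentiable one_ne_zero) x).hasFDerivAt.hasFDerivWithinAt)
      (fun x hx => ?_)⟩
  have h := (hC x hx).trans (le_max_left C 0)
  exact_mod_cast h

theorem stmt15 {d : ℕ}
    (f : ℝ × EuclideanSpace ℝ (Fin d) → EuclideanSpace ℝ (Fin d))
    (hf : ContDiff ℝ 1 f)
    (g : ℝ × EuclideanSpace ℝ (Fin d) → EuclideanSpace ℝ (Fin d))
    (hg : Continuous g)
    (u : ℝ → ℝ → EuclideanSpace ℝ (Fin d) → EuclideanSpace ℝ (Fin d))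
    (huinit : ∀ (s : ℝ) (u₀ : EuclideanSpace ℝ (Fin d)), u s s u₀ = u₀)
    (huderiv : ∀ (s : ℝ) (u₀ : EuclideanSpace ℝ (Fin d)), ∀ t, s ≤ t →
      HasDerivAt (fun τ => u τ s u₀) (f (t, u t s u₀)) t)
    (husmooth : ∀ t : ℝ,
      ContDiff ℝ 1 (fun p : ℝ × EuclideanSpace ℝ (Fin d) => u t p.1 p.2))
    (t₀ T : ℝ) (p₀ : EuclideanSpace ℝ (Fin d))
    (p : ℝ → EuclideanSpace ℝ (Fin d))
    (hp₀ : p t₀ = p₀)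
    (hpderiv : ∀ t ∈ Set.Icc t₀ T, HasDerivAt p (f (t, p t) + g (t, p t)) t) :
    ∀ t ∈ Set.Icc t₀ T,
      p t = u t t₀ p₀ + ∫ s in t₀..t, (fderiv ℝ (u t s) (p s)) (g (s, p s)) := by
  intro t ht
  obtain ⟨ht₀, htT⟩ := ht
  -- Step A: the flow (semigroup) property, from uniqueness of ODE solutions.
  have flow : ∀ (s σ τ : ℝ) (x : EuclideanSpace ℝ (Fin d)), s ≤ σ → σ ≤ τ →
      u τ σ (u σ s x) = u τ s x := by
    intro s σ τ x hsσ hστ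
    have hc1 : ContinuousOn (fun r => u r σ (u σ s x)) (Icc σ τ) := fun r hr =>
      (huderiv σ _ r hr.1).continuousAt.continuousWithinAt
    have hc2 : ContinuousOn (fun r => u r s x) (Icc σ τ) := fun r hr =>
      (huderiv s x r (hsσ.trans hr.1)).continuousAt.continuousWithinAt
    have hK1 : IsCompact ((fun r => u r σ (u σ s x)) '' Icc σ τ ∪
        (fun r => u r s x) '' Icc σ τ) :=
      (isCompact_Icc.image_of_continuousOn hc1).union
        (isCompact_Icc.image_of_continuousOn hc2)
    obtain ⟨R, hR⟩ := hK1.isBounded.subset_closedBall 0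
    obtain ⟨K, hK⟩ := contDiff_lipschitzOnWith_of_compact_convex hf
      (S := (Icc σ τ) ×ˢ closedBall (0 : EuclideanSpace ℝ (Fin d)) R)
      ((convex_Icc _ _).prod (convex_closedBall _ _))
      (isCompact_Icc.prod (isCompact_closedBall _ _))
    have hv : ∀ r, LipschitzOnWith K (fun z => f (r, z))
        (if r ∈ Icc σ τ then closedBall (0 : EuclideanSpace ℝ (Fin d)) R else ∅) := by
      intro r
      by_cases hr : r ∈ Icc σ τ
      · simp only [if_pos hr]
        intro a ha b hb
        simpa [Prod.edist_eq] using hK (Set.mk_mem_prod hr ha) (Set.mk_mem_prod hr hb)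
      · simp only [if_neg hr]
        exact lipschitzOnWith_empty _ _
    have key := ODE_solution_unique_of_mem_Icc_right (v := fun r z => f (r, z))
      (s := fun r => if r ∈ Icc σ τ then closedBall (0 : EuclideanSpace ℝ (Fin d)) R else ∅)
      (fun r _ => hv r) hc1
      (fun r hr => (huderiv σ _ r hr.1).hasDerivWithinAt)
      (fun r hr => by
        simp only [if_pos (Ico_subset_Icc_self hr)]
        exact hR (Or.inl ⟨r, Ico_subset_Icc_self hr, rfl⟩))
      hc2
      (fun r hr => (huderiv s x r (hsσ.trans hr.1)).hasDerivWithinAt)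
      (fun r hr => by
        simp only [if_pos (Ico_subset_Icc_self hr)]
        exact hR (Or.inr ⟨r, Ico_subset_Icc_self hr, rfl⟩))
      (huinit σ (u σ s x))
    exact key (right_mem_Icc.mpr hστ)
  -- Notation: F is the C¹ map (s, y) ↦ u t s y.
  set F : ℝ × EuclideanSpace ℝ (Fin d) → EuclideanSpace ℝ (Fin d) :=
    fun q => u t q.1 q.2 with hFdef
  have hFsm : ContDiff ℝ 1 F := husmooth t
  have hFd : Differentiable ℝ F := hFsm.differentiable one_ne_zero
  -- Step B: the derivative of F in the direction (1, f(σ,x)) vanishes.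
  have keyB : ∀ (σ : ℝ) (x : EuclideanSpace ℝ (Fin d)), σ < t →
      fderiv ℝ F (σ, x) (1, f (σ, x)) = 0 := by
    intro σ x hσt
    have hγ : HasDerivAt (fun r => u r σ x) (f (σ, x)) σ := by
      have h := huderiv σ x σ le_rfl
      rwa [huinit σ x] at h
    have hcurve : HasDerivAt (fun r => (r, u r σ x)) ((1 : ℝ), f (σ, x)) σ :=
      (hasDerivAt_id σ).prodMk hγ
    have hG : HasDerivAt (fun r => F (r, u r σ x))
        ((fderiv ℝ F (σ, x)) (1, f (σ, x))) σ := by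
      have h1 := (hFd (σ, u σ σ x)).hasFDerivAt.comp_hasDerivAt σ hcurve
      rw [huinit σ x] at h1
      simpa [Function.comp_def] using h1
    have hGconst : ∀ r ∈ Icc σ t, F (r, u r σ x) = u t σ x := by
      intro r hr
      exact flow σ r t x hr.1 hr.2
    have hud : UniqueDiffWithinAt ℝ (Icc σ t) σ :=
      (uniqueDiffOn_Icc hσt) σ (left_mem_Icc.mpr hσt.le)
    have h0 : HasDerivWithinAt (fun r => F (r, u r σ x)) 0 (Icc σ t) σ :=
      (hasDerivWithinAt_const σ (Icc σ t) (u t σ x)).congr hGconst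
        (hGconst σ (left_mem_Icc.mpr hσt.le))
    have e1 := hG.hasDerivWithinAt.derivWithin hud
    have e2 := h0.derivWithin hud
    rw [← e1, e2]
  -- fderiv of the partial map u t s equals fderiv of F composed with inr.
  have hrepr : ∀ (s : ℝ) (y w : EuclideanSpace ℝ (Fin d)),
      (fderiv ℝ (u t s) y) w = (fderiv ℝ F (s, y)) (0, w) := by
    intro s y w
    have h1 : HasFDerivAt (u t s)
        ((fderiv ℝ F (s, y)).comp
          (ContinuousLinearMap.inr ℝ ℝ (EuclideanSpace ℝ (Fin d)))) y := by
      have h2 := (hFd (s, y)).hasFDerivAt.comp y (hasFDerivAt_prodMk_right s y)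
      simpa [Function.comp_def] using h2
    rw [h1.fderiv]
    rfl
  -- Step C: differentiate s ↦ F (s, p s).
  have pcont : ContinuousOn p (Icc t₀ t) := fun s hs =>
    (hpderiv s ⟨hs.1, hs.2.trans htT⟩).continuousAt.continuousWithinAt
  have hcont : ContinuousOn (fun s => F (s, p s)) (Icc t₀ t) :=
    hFsm.continuous.comp_continuousOn (continuousOn_id.prodMk pcont)
  have hderiv : ∀ s ∈ Ioo t₀ t,
      HasDerivWithinAt (fun r => F (r, p r))
        ((fderiv ℝ (u t s) (p s)) (g (s, p s))) (Ioi s) s := by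
    intro s hs
    have hps : HasDerivAt p (f (s, p s) + g (s, p s)) s :=
      hpderiv s ⟨hs.1.le, hs.2.le.trans htT⟩
    have hcurve : HasDerivAt (fun r => (r, p r))
        ((1 : ℝ), f (s, p s) + g (s, p s)) s := (hasDerivAt_id s).prodMk hps
    have hH : HasDerivAt (fun r => F (r, p r))
        ((fderiv ℝ F (s, p s)) (1, f (s, p s) + g (s, p s))) s := by
      have h1 := (hFd (s, p s)).hasFDerivAt.comp_hasDerivAt s hcurve
      simpa [Function.comp_def] using h1
    have hsplit : (fderiv ℝ F (s, p s)) ((1 : ℝ), f (s, p s) + g (s, p s))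
        = (fderiv ℝ (u t s) (p s)) (g (s, p s)) := by
      have hsum : ((1 : ℝ), f (s, p s) + g (s, p s))
          = ((1 : ℝ), f (s, p s)) + ((0 : ℝ), g (s, p s)) := by
        simp [Prod.ext_iff]
      rw [hsum, map_add, keyB s (p s) hs.2, zero_add, hrepr s (p s) (g (s, p s))]
    rw [← hsplit]
    exact hH.hasDerivWithinAt
  -- integrability of the integrand
  have hint : ContinuousOn
      (fun s => (fderiv ℝ (u t s) (p s)) (g (s, p s))) (Icc t₀ t) := by
    have heq : (fun s => (fderiv ℝ (u t s) (p s)) (g (s, p s)))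
        = fun s => (fderiv ℝ F (s, p s)) (0, g (s, p s)) := by
      funext s; exact hrepr s (p s) _
    rw [heq]
    have hA : ContinuousOn (fun s => fderiv ℝ F (s, p s)) (Icc t₀ t) :=
      (hFsm.continuous_fderiv one_ne_zero).comp_continuousOn
        (continuousOn_id.prodMk pcont)
    have hw : ContinuousOn
        (fun s => ((0 : ℝ × EuclideanSpace ℝ (Fin d)).1, g (s, p s))) (Icc t₀ t) :=
      continuousOn_const.prodMk (hg.comp_continuousOn (continuousOn_id.prodMk pcont))
    exact isBoundedBilinearMap_apply.continuous.comp_continuousOn (hA.prodMk hw)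
  -- Step D: FTC
  have hFTC := intervalIntegral.integral_eq_sub_of_hasDeriv_right_of_le ht₀ hcont hderiv
    (hint.intervalIntegrable_of_Icc ht₀)
  rw [hFTC]
  show p t = u t t₀ p₀ + (u t t (p t) - u t t₀ (p t₀))
  rw [huinit, hp₀]
  abel
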